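/- If a clique K of a connected graph G contains exactly two K-end vertices u and v, then every local multiset resolving set of G contains exactly one of u and v. -/
import Mathlib


open SimpleGraph Finset

/-- The representation multiset of `u` with respect to `W`: the multiset of distances
from `u` to the vertices of `W`. -/
noncomputable def mrep {V : Type*} (G : SimpleGraph V) (u : V) (W : Finset V) : Multiset ℕ :=
  W.val.map fun w => G.dist u w

/-- `W` is a local multiset resolving set: adjacent vertices have distinct
representation multisets. -/
def IsLocalMultisetResolving {V : Type*} (G : SimpleGraph V) (W : Finset V) : Prop :=
  ∀ u v : V, G.Adj u v → mrep G u W ≠ mrep G v W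

private lemma nbhd_eq {V : Type*} [Fintype V] [DecidableEq V] (G : SimpleGraph V)
    [DecidableRel G.Adj] (K : Finset V) (hK : G.IsClique ↑K) (hK1 : 1 ≤ K.card)
    (u : V) (hu : u ∈ K) (hue : G.degree u = K.card - 1) :
    G.neighborFinset u = K.erase u := by
  have hsub : K.erase u ⊆ G.neighborFinset u := by
    intro x hx
    rw [mem_erase] at hx
    rw [mem_neighborFinset]
    exact hK hu hx.2 (Ne.symm hx.1)
  refine (Finset.eq_of_subset_of_card_le hsub ?_).symm
  rw [Finset.card_erase_of_mem hu, ← hue, card_neighborFinset_eq_degree]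

private lemma dist_le_dist {V : Type*} [Fintype V] [DecidableEq V] (G : SimpleGraph V)
    [DecidableRel G.Adj] (hconn : G.Connected) (u v : V) (huv : u ≠ v)
    (hN : ∀ x, x ≠ u → G.Adj v x → G.Adj u x) (hadj : G.Adj u v)
    (w : V) (hwu : w ≠ u) (hwv : w ≠ v) : G.dist u w ≤ G.dist v w := by
  obtain ⟨p, hp⟩ := (hconn v w).exists_walk_length_eq_dist
  cases p with
  | nil => exact absurd rfl hwv.symm
  | cons h q =>
    rename_i x
    rw [SimpleGraph.Walk.length_cons] at hp
    by_cases hxu : x = u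
    · calc G.dist u w ≤ q.length := by subst hxu; exact SimpleGraph.dist_le q
        _ ≤ G.dist v w := by omega
    · have hadj' : G.Adj u x := hN x hxu h
      calc G.dist u w ≤ (SimpleGraph.Walk.cons hadj' q).length := SimpleGraph.dist_le _
        _ = G.dist v w := by rw [SimpleGraph.Walk.length_cons, hp]

/-- If a clique `K` of a connected graph `G` contains exactly two `K`-end vertices
`u` and `v`, then every local multiset resolving set of `G` contains exactly one of
`u` and `v`. -/
theorem stmt_6 {V : Type*} [Fintype V] [DecidableEq V] (G : SimpleGraph V)
    [DecidableRel G.Adj] (hconn : G.Connected)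
    (K : Finset V) (hK : G.IsClique ↑K) (hK3 : 3 ≤ K.card)
    (u v : V) (hu : u ∈ K) (hv : v ∈ K) (huv : u ≠ v)
    (hue : G.degree u = K.card - 1) (hve : G.degree v = K.card - 1)
    (honly : ∀ w ∈ K, G.degree w = K.card - 1 → w = u ∨ w = v) :
    ∀ W : Finset V, IsLocalMultisetResolving G W →
      ((u ∈ W ∧ v ∉ W) ∨ (v ∈ W ∧ u ∉ W)) := by
  intro W hW
  have hadj : G.Adj u v := hK hu hv huv
  have hNu := nbhd_eq G K hK (by omega) u hu hue
  have hNv := nbhd_eq G K hK (by omega) v hv hve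
  have hNuv : ∀ x, x ≠ u → G.Adj v x → G.Adj u x := by
    intro x hxu h
    have : x ∈ G.neighborFinset v := by rwa [mem_neighborFinset]
    rw [hNv, mem_erase] at this
    rw [← mem_neighborFinset, hNu, mem_erase]
    exact ⟨hxu, this.2⟩
  have hNvu : ∀ x, x ≠ v → G.Adj u x → G.Adj v x := by
    intro x hxv h
    have : x ∈ G.neighborFinset u := by rwa [mem_neighborFinset]
    rw [hNu, mem_erase] at this
    rw [← mem_neighborFinset, hNv, mem_erase]
    exact ⟨hxv, this.2⟩
  have key : ∀ w, w ≠ u → w ≠ v → G.dist u w = G.dist v w := by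
    intro w hwu hwv
    exact le_antisymm (dist_le_dist G hconn u v huv hNuv hadj w hwu hwv)
      (dist_le_dist G hconn v u huv.symm hNvu hadj.symm w hwv hwu)
  by_cases huw : u ∈ W <;> by_cases hvw : v ∈ W
  · -- both in W: contradiction
    exfalso
    apply hW u v hadj
    have hvW' : v ∈ W.erase u := mem_erase.mpr ⟨huv.symm, hvw⟩
    have hWval : W.val = u ::ₘ v ::ₘ ((W.erase u).erase v).val := by
      rw [Finset.erase_val, Finset.erase_val, Multiset.cons_erase, Multiset.cons_erase huw]
      rw [Multiset.mem_erase_of_ne huv.symm]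
      exact hvw
    have hduv : G.dist u v = 1 := (SimpleGraph.dist_eq_one_iff_adj).mpr hadj
    have hdvu : G.dist v u = 1 := (SimpleGraph.dist_eq_one_iff_adj).mpr hadj.symm
    unfold mrep
    rw [hWval]
    simp only [Multiset.map_cons, SimpleGraph.dist_self, hduv, hdvu]
    rw [Multiset.cons_swap]
    congr 2
    apply Multiset.map_congr rfl
    intro w hw
    rw [← Finset.mem_def, mem_erase, mem_erase] at hw
    exact key w hw.2.1 hw.1
  · exact Or.inl ⟨huw, hvw⟩
  · exact Or.inr ⟨hvw, huw⟩
  · -- neither in W: contradiction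
    exfalso
    apply hW u v hadj
    unfold mrep
    apply Multiset.map_congr rfl
    intro w hw
    rw [← Finset.mem_def] at hw
    exact key w (fun h => huw (h ▸ hw)) (fun h => hvw (h ▸ hw))
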